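/- Let φ : (-1,1) → ℝ be continuous with lim_{y→1⁻} φ(y) = +∞ and lim_{y→-1⁺} φ(y) = -∞. Let ε > 0, δ₀ ∈ (0,1), T > 0, h ∈ L^∞([0,T]), and let y : [0,T] → ℝ be a C¹ solution of ε·y' + φ(y) = h with |y(0)| ≤ 1 - δ₀ and |y(t)| ≤ 1 for all t. Then there exists δ > 0, depending only on δ₀ and ‖h‖_{L^∞([0,T])} (and independent of ε), such that |y(t)| ≤ 1 - δ for all t ∈ [0,T]. -/

import Mathlib

open Set Filter

lemma singular_ode_aux (φ : ℝ → ℝ) (M a : ℝ)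
    (hφ : ∀ x ∈ Set.Ioo a 1, M ≤ φ x)
    (ε : ℝ) (hε : 0 < ε) (T : ℝ) (h y : ℝ → ℝ)
    (hh : ∀ t ∈ Set.Icc (0 : ℝ) T, h t ≤ M)
    (hode : ∀ t ∈ Set.Icc (0 : ℝ) T, HasDerivAt y ((h t - φ (y t)) / ε) t)
    (hy0 : y 0 ≤ a)
    (hy1 : ∀ t ∈ Set.Icc (0 : ℝ) T, y t ≤ 1) :
    ∀ t ∈ Set.Icc (0 : ℝ) T, y t ≤ a := by
  by_contra hcon
  push_neg at hcon
  obtain ⟨t₀, ht₀, hyt₀⟩ := hcon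
  have hycont : ContinuousOn y (Set.Icc 0 T) := fun t ht =>
    (hode t ht).continuousAt.continuousWithinAt
  set S : Set ℝ := {t | t ∈ Set.Icc 0 t₀ ∧ y t ≤ a} with hS
  have hsub : Set.Icc (0:ℝ) t₀ ⊆ Set.Icc 0 T := Set.Icc_subset_Icc le_rfl ht₀.2
  have hSclosed : IsClosed S := by
    have hEq : S = Set.Icc 0 t₀ ∩ y ⁻¹' Set.Iic a := rfl
    rw [hEq]
    exact (hycont.mono hsub).preimage_isClosed_of_isClosed isClosed_Icc isClosed_Iic
  have hScomp : IsCompact S :=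
    isCompact_Icc.of_isClosed_subset hSclosed (fun t ht => ht.1)
  have hSne : S.Nonempty := ⟨0, ⟨le_rfl, ht₀.1⟩, hy0⟩
  have hsS : sSup S ∈ S := hScomp.sSup_mem hSne
  set s := sSup S with hs
  have hst₀ : s < t₀ := lt_of_le_of_ne hsS.1.2 (by
    intro heq
    rw [heq] at hsS
    exact absurd hsS.2 (not_le.mpr hyt₀))
  -- mean value theorem
  obtain ⟨c, hc, hceq⟩ := exists_hasDerivAt_eq_slope y (fun t => (h t - φ (y t)) / ε) hst₀
    (hycont.mono (Set.Icc_subset_Icc hsS.1.1 ht₀.2))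
    (fun x hx => hode x ⟨le_trans hsS.1.1 hx.1.le, le_trans hx.2.le ht₀.2⟩)
  have hcIcc : c ∈ Set.Icc (0:ℝ) T := ⟨le_trans hsS.1.1 hc.1.le, le_trans hc.2.le ht₀.2⟩
  have hslope : 0 < (h c - φ (y c)) / ε := by
    rw [hceq]
    exact div_pos (by linarith [hsS.2]) (by linarith)
  have hnum : φ (y c) < h c := by
    by_contra hle
    push_neg at hle
    exact absurd hslope (not_lt.mpr (div_nonpos_of_nonpos_of_nonneg (by linarith) hε.le))
  have hya : a < y c := by
    by_contra hle
    push_neg at hle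
    have hmem : c ∈ S := ⟨⟨le_trans hsS.1.1 hc.1.le, hc.2.le⟩, hle⟩
    exact absurd hc.1 (not_lt.mpr (le_csSup hScomp.bddAbove hmem))
  have hyc1 : y c ≤ 1 := hy1 c hcIcc
  rcases lt_or_eq_of_le hyc1 with hlt | heq
  · have h1 := hφ (y c) ⟨hya, hlt⟩
    have h2 := hh c hcIcc
    linarith
  · -- y c = 1, positive derivative at c < T forces y > 1 just after c
    have hcT : c < T := lt_of_lt_of_le hc.2 ht₀.2
    have hd : HasDerivWithinAt y ((h c - φ (y c)) / ε) (Set.Ioi c) c :=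
      (hode c hcIcc).hasDerivWithinAt
    rw [hasDerivWithinAt_iff_tendsto_slope] at hd
    have hds : Set.Ioi c \ {c} = Set.Ioi c := by
      ext x; simp only [Set.mem_diff, Set.mem_Ioi, Set.mem_singleton_iff]
      exact ⟨fun hx => hx.1, fun hx => ⟨hx, ne_of_gt hx⟩⟩
    rw [hds] at hd
    have h1 : ∀ᶠ t in nhdsWithin c (Set.Ioi c), 0 < slope y c t :=
      hd.eventually (eventually_gt_nhds hslope)
    have h2 : ∀ᶠ t in nhdsWithin c (Set.Ioi c), t < T :=
      eventually_nhdsWithin_of_eventually_nhds (eventually_lt_nhds hcT)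
    have h3 : ∀ᶠ t in nhdsWithin c (Set.Ioi c), t ∈ Set.Ioi c :=
      eventually_mem_nhdsWithin
    obtain ⟨t, hts, htT, htc⟩ := (h1.and (h2.and h3)).exists
    have hslope' : 0 < (y t - y c) / (t - c) := by
      rwa [slope_def_field] at hts
    have hyt : 1 < y t := by
      have htc' : (0:ℝ) < t - c := by simpa using sub_pos.mpr (Set.mem_Ioi.mp htc)
      have := (div_pos_iff.mp hslope')
      rcases this with ⟨hn, _⟩ | ⟨_, hd'⟩
      · linarith [heq]
      · linarith
    exact absurd (hy1 t ⟨le_trans hcIcc.1 (le_of_lt htc), htT.le⟩) (not_le.mpr hyt)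

/-- Comparison principle for the singular ODE `ε y' + φ(y) = h`: if `φ` blows up
at `±1`, `|y 0| ≤ 1 - δ₀` and `|y| ≤ 1`, with `‖h‖_{L^∞} ≤ M`, then `|y| ≤ 1 - δ`
for some `δ > 0` depending only on `δ₀` and `M` (independent of `ε`). -/
theorem singular_ode_comparison (φ : ℝ → ℝ)
    (hc : ContinuousOn φ (Set.Ioo (-1 : ℝ) 1))
    (htop : Filter.Tendsto φ (nhdsWithin 1 (Set.Iio 1)) Filter.atTop)
    (hbot : Filter.Tendsto φ (nhdsWithin (-1) (Set.Ioi (-1))) Filter.atBot)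
    (δ₀ M : ℝ) (hδ₀ : δ₀ ∈ Set.Ioo (0 : ℝ) 1) (hM : 0 ≤ M) :
    ∃ δ > (0 : ℝ), ∀ ε > (0 : ℝ), ∀ T > (0 : ℝ), ∀ h y : ℝ → ℝ,
      (∀ t ∈ Set.Icc (0 : ℝ) T, |h t| ≤ M) →
      (∀ t ∈ Set.Icc (0 : ℝ) T, HasDerivAt y ((h t - φ (y t)) / ε) t) →
      |y 0| ≤ 1 - δ₀ →
      (∀ t ∈ Set.Icc (0 : ℝ) T, |y t| ≤ 1) →
      ∀ t ∈ Set.Icc (0 : ℝ) T, |y t| ≤ 1 - δ := by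
  have htopE : ∀ᶠ x in nhdsWithin 1 (Set.Iio 1), M ≤ φ x :=
    htop.eventually (eventually_ge_atTop M)
  obtain ⟨l, hl, hlsub⟩ := mem_nhdsLT_iff_exists_Ioo_subset.mp htopE
  have hbotE : ∀ᶠ x in nhdsWithin (-1 : ℝ) (Set.Ioi (-1)), φ x ≤ -M :=
    hbot.eventually (eventually_le_atBot (-M))
  obtain ⟨u, hu, husub⟩ := mem_nhdsGT_iff_exists_Ioo_subset.mp hbotE
  set a : ℝ := max l (1 - δ₀) with ha
  set b : ℝ := min u (δ₀ - 1) with hb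
  have ha1 : a < 1 := max_lt hl (by linarith [hδ₀.1])
  have hb1 : -1 < b := lt_min hu (by linarith [hδ₀.1])
  refine ⟨min (1 - a) (1 + b), lt_min (by linarith) (by linarith), ?_⟩
  intro ε hε T hT h y hh hode hy0 hy1 t ht
  have habs := abs_le.mp hy0
  -- upper bound
  have hup : ∀ t ∈ Set.Icc (0 : ℝ) T, y t ≤ a := by
    refine singular_ode_aux φ M a ?_ ε hε T h y
      (fun t ht => (abs_le.mp (hh t ht)).2) hode ?_ (fun t ht => (abs_le.mp (hy1 t ht)).2)
    · intro x hx
      exact hlsub ⟨lt_of_le_of_lt (le_max_left _ _) hx.1, hx.2⟩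
    · exact le_trans habs.2 (le_max_right _ _)
  -- lower bound via reflection
  have hlow : ∀ t ∈ Set.Icc (0 : ℝ) T, -(y t) ≤ -b := by
    refine singular_ode_aux (fun x => -φ (-x)) M (-b) ?_ ε hε T (fun t => -h t)
      (fun t => -(y t)) (fun t ht => by
        show -h t ≤ M; have := (abs_le.mp (hh t ht)).1; linarith) ?_ ?_
      (fun t ht => by show -(y t) ≤ 1; have := (abs_le.mp (hy1 t ht)).1; linarith)
    · intro x hx
      have hmx : -x ∈ Set.Ioo (-1 : ℝ) b := ⟨by linarith [hx.2], by linarith [hx.1]⟩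
      have : φ (-x) ≤ -M := husub ⟨hmx.1, lt_of_lt_of_le hmx.2 (min_le_left _ _)⟩
      show M ≤ -φ (-x)
      linarith
    · intro t ht
      have hd : HasDerivAt (fun t => -(y t)) (-((h t - φ (y t)) / ε)) t := (hode t ht).neg
      convert hd using 1
      simp
      ring
    · have : b ≤ y 0 := le_trans (min_le_right _ _) (by linarith [habs.1])
      show -(y 0) ≤ -b
      linarith
  have h1 := hup t ht
  have h2 := hlow t ht
  rw [abs_le]
  constructor
  · have : min (1 - a) (1 + b) ≤ 1 + b := min_le_right _ _
    linarith
  · have : min (1 - a) (1 + b) ≤ 1 - a := min_le_left _ _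
    linarith
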